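/- Let $h$ be the free Dirichlet Schr\"odinger operator on $\mathbb{N}$, and define $g_0[n,m]=\min(n,m)$ and $g_2[n,m]=-\tfrac{1}{6}\min(n,m)+\tfrac{1}{6}\min(n,m)^3+\tfrac{1}{2}nm\max(n,m)$. Then $h g_2 u = -g_0 u$ for every finitely supported $u:\mathbb{N}\to\mathbb{C}$. -/
import Mathlib


/-- The free Dirichlet discrete Laplacian on the half-line `ℕ = {1,2,…}`
(the value at the unused index `0` is set to `0`). -/
noncomputable def halfLineOp (u : ℕ → ℂ) : ℕ → ℂ := fun n =>
  if n = 0 then 0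
  else if n = 1 then 2 * u 1 - u 2
  else 2 * u n - u (n + 1) - u (n - 1)

/-- The kernel `g₂`. -/
noncomputable def E (n m : ℕ) : ℂ :=
  -(1 / 6 : ℂ) * ((min n m : ℕ) : ℂ) + (1 / 6 : ℂ) * ((min n m : ℕ) : ℂ) ^ 3
    + (1 / 2 : ℂ) * (n : ℂ) * (m : ℂ) * ((max n m : ℕ) : ℂ)

lemma E_kernel (n m : ℕ) (hn : 1 ≤ n) :
    2 * E n m - E (n + 1) m - E (n - 1) m = -((min n m : ℕ) : ℂ) := by
  have hcast : ((n - 1 : ℕ) : ℂ) = (n : ℂ) - 1 := by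
    push_cast [Nat.cast_sub hn]; ring
  rcases lt_trichotomy m n with h | h | h
  · have h1 : min n m = m := min_eq_right h.le
    have h2 : min (n + 1) m = m := min_eq_right (by omega)
    have h3 : min (n - 1) m = m := min_eq_right (by omega)
    have h4 : max n m = n := max_eq_left h.le
    have h5 : max (n + 1) m = n + 1 := max_eq_left (by omega)
    have h6 : max (n - 1) m = n - 1 := max_eq_left (by omega)
    simp only [E, h1, h2, h3, h4, h5, h6, hcast]
    push_cast
    ring
  · subst h
    have h1 : min m m = m := min_self m
    have h2 : min (m + 1) m = m := min_eq_right (by omega)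
    have h3 : min (m - 1) m = m - 1 := min_eq_left (by omega)
    have h4 : max m m = m := max_self m
    have h5 : max (m + 1) m = m + 1 := max_eq_left (by omega)
    have h6 : max (m - 1) m = m := max_eq_right (by omega)
    simp only [E, h1, h2, h3, h4, h5, h6, hcast]
    push_cast
    ring
  · have h1 : min n m = n := min_eq_left h.le
    have h2 : min (n + 1) m = n + 1 := min_eq_left (by omega)
    have h3 : min (n - 1) m = n - 1 := min_eq_left (by omega)
    have h4 : max n m = m := max_eq_right h.le
    have h5 : max (n + 1) m = m := max_eq_right (by omega)
    have h6 : max (n - 1) m = m := max_eq_right (by omega)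
    simp only [E, h1, h2, h3, h4, h5, h6, hcast]
    push_cast
    ring

/-- `h g₂ u = -g₀ u`, where `g₂[n,m] = -(1/6)min(n,m) + (1/6)min(n,m)³ + (1/2)nm·max(n,m)`
and `g₀[n,m] = min(n,m)`. -/
theorem halfLineOp_g2 (u : ℕ → ℂ) (hu0 : u 0 = 0) (hfin : (Function.support u).Finite) :
    ∀ n : ℕ, 1 ≤ n →
      halfLineOp (fun k => ∑' m : ℕ,
          (-(1 / 6 : ℂ) * ((min k m : ℕ) : ℂ) + (1 / 6 : ℂ) * ((min k m : ℕ) : ℂ) ^ 3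
            + (1 / 2 : ℂ) * (k : ℂ) * (m : ℂ) * ((max k m : ℕ) : ℂ)) * u m) n =
        -∑' m : ℕ, ((min n m : ℕ) : ℂ) * u m := by
  intro n hn
  set s : Finset ℕ := hfin.toFinset with hs
  have hsupp : ∀ b, b ∉ s → u b = 0 := by
    intro b hb
    by_contra h
    exact hb (hfin.mem_toFinset.2 h)
  have hf : ∀ k, (∑' m : ℕ,
      (-(1 / 6 : ℂ) * ((min k m : ℕ) : ℂ) + (1 / 6 : ℂ) * ((min k m : ℕ) : ℂ) ^ 3
        + (1 / 2 : ℂ) * (k : ℂ) * (m : ℂ) * ((max k m : ℕ) : ℂ)) * u m)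
      = ∑ m ∈ s, E k m * u m := by
    intro k
    exact tsum_eq_sum (fun b hb => by rw [hsupp b hb, mul_zero])
  have hg : (∑' m : ℕ, ((min n m : ℕ) : ℂ) * u m) = ∑ m ∈ s, ((min n m : ℕ) : ℂ) * u m :=
    tsum_eq_sum (fun b hb => by rw [hsupp b hb, mul_zero])
  have hE0 : ∀ m : ℕ, E 0 m = 0 := by
    intro m; simp [E]
  have hstep : halfLineOp (fun k => ∑' m : ℕ,
      (-(1 / 6 : ℂ) * ((min k m : ℕ) : ℂ) + (1 / 6 : ℂ) * ((min k m : ℕ) : ℂ) ^ 3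
        + (1 / 2 : ℂ) * (k : ℂ) * (m : ℂ) * ((max k m : ℕ) : ℂ)) * u m) n
      = ∑ m ∈ s, (2 * E n m - E (n + 1) m - E (n - 1) m) * u m := by
    rcases eq_or_lt_of_le hn with h1 | h2
    · subst h1
      simp only [halfLineOp, if_neg one_ne_zero, if_pos rfl]
      rw [hf 1, hf 2, Finset.mul_sum, ← Finset.sum_sub_distrib]
      apply Finset.sum_congr rfl
      intro m _
      rw [show (1 : ℕ) - 1 = 0 from rfl, hE0 m]
      ring
    · have hn0 : n ≠ 0 := by omega
      have hn1 : n ≠ 1 := by omega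
      simp only [halfLineOp, if_neg hn0, if_neg hn1]
      rw [hf n, hf (n + 1), hf (n - 1), Finset.mul_sum, ← Finset.sum_sub_distrib,
        ← Finset.sum_sub_distrib]
      apply Finset.sum_congr rfl
      intro m _
      ring
  rw [hstep, hg]
  rw [← Finset.sum_neg_distrib]
  apply Finset.sum_congr rfl
  intro m _
  rw [E_kernel n m hn]
  ring
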